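/- For any rate matrix Q indexed by a nonempty finite set 𝒳, the family of matrices T_t^s := e^{Q(s−t)}, defined for all reals 0 ≤ t ≤ s, is a well-behaved transition matrix system. That is: (i) for every Δ ≥ 0, the matrix exponential e^{QΔ} is a transition matrix; (ii) T_t^t = I for all t ≥ 0 and T_t^s = T_t^r · T_r^s for all 0 ≤ t ≤ r ≤ s; and (iii) for every t ≥ 0, limsup_{Δ→0+} (1/Δ)‖T_t^{t+Δ} − I‖ < +∞, and for every t > 0, limsup_{Δ→0+} (1/Δ)‖T_{t−Δ}^t − I‖ < +∞. -/

import Mathlib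

open scoped BigOperators Topology

/-- The operator norm of a matrix induced by the supremum norm on `X → ℝ`:
`‖A‖ = max_{x} Σ_{y} |A x y|`. -/
noncomputable def matNorm {X : Type*} [Fintype X] (A : Matrix X X ℝ) : ℝ :=
  ⨆ x, ∑ y, |A x y|

/-- A transition matrix: nonnegative entries, rows summing to one. -/
def IsTransitionMatrix {X : Type*} [Fintype X] (T : Matrix X X ℝ) : Prop :=
  (∀ x y, 0 ≤ T x y) ∧ ∀ x, ∑ y, T x y = 1

/-- A (transition) rate matrix: nonnegative off-diagonal entries, rows summing to zero. -/
def IsRateMatrix {X : Type*} [Fintype X] (Q : Matrix X X ℝ) : Prop :=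
  (∀ x y, x ≠ y → 0 ≤ Q x y) ∧ ∀ x, ∑ y, Q x y = 0

/-- The matrix exponential `e^A = Σ_{k≥0} A^k / k!`. -/
noncomputable def mexp {X : Type*} [Fintype X] [DecidableEq X] (A : Matrix X X ℝ) :
    Matrix X X ℝ :=
  ∑' k : ℕ, ((k.factorial : ℝ)⁻¹) • A ^ k

/-- The exponential transition matrix system `T_t^s = e^{Q(s−t)}` corresponding to `Q`. -/
noncomputable def expSystem {X : Type*} [Fintype X] [DecidableEq X]
    (Q : Matrix X X ℝ) (t s : ℝ) : Matrix X X ℝ :=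
  mexp ((s - t) • Q)

section aux
variable {X : Type*} [Fintype X] [DecidableEq X]

lemma mexp_eq_exp (A : Matrix X X ℝ) : mexp A = NormedSpace.exp A := by
  rw [NormedSpace.exp_eq_tsum ℝ]; rfl

lemma mexp_hasSum (A : Matrix X X ℝ) :
    HasSum (fun k : ℕ => ((k.factorial : ℝ)⁻¹) • A ^ k) (mexp A) := by
  letI : SeminormedRing (Matrix X X ℝ) := Matrix.linftyOpSemiNormedRing
  letI : NormedRing (Matrix X X ℝ) := Matrix.linftyOpNormedRing
  letI : NormedAlgebra ℝ (Matrix X X ℝ) := Matrix.linftyOpNormedAlgebra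
  haveI : CompleteSpace (Matrix X X ℝ) :=
    (by infer_instance : CompleteSpace (X → X → ℝ))
  rw [mexp_eq_exp]
  exact NormedSpace.exp_series_hasSum_exp' A

lemma mexp_hasSum_apply (A : Matrix X X ℝ) (x y : X) :
    HasSum (fun k : ℕ => (((k.factorial : ℝ)⁻¹) • A ^ k) x y) (mexp A x y) :=
  (Pi.hasSum.mp ((Pi.hasSum.mp (mexp_hasSum A)) x)) y

lemma mexp_zero : mexp (0 : Matrix X X ℝ) = 1 := by
  rw [mexp_eq_exp, NormedSpace.exp_zero]

lemma mexp_add_of_commute (A B : Matrix X X ℝ) (h : Commute A B) :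
    mexp (A + B) = mexp A * mexp B := by
  simp only [mexp_eq_exp]
  exact Matrix.exp_add_of_commute A B h

lemma mexp_smul_one (r : ℝ) :
    mexp (r • (1 : Matrix X X ℝ)) = Real.exp r • (1 : Matrix X X ℝ) := by
  letI : SeminormedRing (Matrix X X ℝ) := Matrix.linftyOpSemiNormedRing
  letI : NormedRing (Matrix X X ℝ) := Matrix.linftyOpNormedRing
  letI : NormedAlgebra ℝ (Matrix X X ℝ) := Matrix.linftyOpNormedAlgebra
  haveI : CompleteSpace (Matrix X X ℝ) :=
    (by infer_instance : CompleteSpace (X → X → ℝ))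
  rw [mexp_eq_exp, ← Algebra.algebraMap_eq_smul_one, Real.exp_eq_exp_ℝ,
    ← Algebra.algebraMap_eq_smul_one]
  exact (NormedSpace.algebraMap_exp_comm (𝕂 := ℝ) (𝔸 := Matrix X X ℝ) r).symm

lemma pow_entry_nonneg {M : Matrix X X ℝ} (hM : ∀ x y, 0 ≤ M x y) (k : ℕ) :
    ∀ x y, 0 ≤ (M ^ k) x y := by
  induction k with
  | zero => intro x y; by_cases h : x = y <;> simp [Matrix.one_apply, h]
  | succ n ih =>
    intro x y
    rw [pow_succ, Matrix.mul_apply]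
    exact Finset.sum_nonneg fun z _ => mul_nonneg (ih x z) (hM z y)

lemma mexp_entry_nonneg {M : Matrix X X ℝ} (hM : ∀ x y, 0 ≤ M x y) (x y : X) :
    0 ≤ mexp M x y := by
  rw [← (mexp_hasSum_apply M x y).tsum_eq]
  refine tsum_nonneg fun k => ?_
  have : (((k.factorial : ℝ)⁻¹) • M ^ k) x y = ((k.factorial : ℝ)⁻¹) * (M ^ k) x y := rfl
  rw [this]
  exact mul_nonneg (by positivity) (pow_entry_nonneg hM k x y)

lemma rowsum_pow_succ {M : Matrix X X ℝ} (hM : ∀ x, ∑ y, M x y = 0) (k : ℕ) :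
    ∀ x, ∑ y, (M ^ (k + 1)) x y = 0 := by
  induction k with
  | zero => intro x; simpa using hM x
  | succ n ih =>
    intro x
    rw [pow_succ]
    simp only [Matrix.mul_apply]
    rw [Finset.sum_comm]
    simp only [← Finset.mul_sum, hM, mul_zero, Finset.sum_const_zero]

lemma mexp_rowsum_one {M : Matrix X X ℝ} (hM : ∀ x, ∑ y, M x y = 0) (x : X) :
    ∑ y, mexp M x y = 1 := by
  have hsum : ∀ y : X, HasSum (fun k : ℕ => (((k.factorial : ℝ)⁻¹) • M ^ k) x y)
      (mexp M x y) := fun y => mexp_hasSum_apply M x y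
  have h1 : ∑ y, mexp M x y = ∑ y, ∑' k : ℕ, (((k.factorial : ℝ)⁻¹) • M ^ k) x y :=
    Finset.sum_congr rfl fun y _ => ((hsum y).tsum_eq).symm
  rw [h1, ← Summable.tsum_finsetSum (fun y _ => (hsum y).summable)]
  have h2 : ∀ k : ℕ, (∑ y, (((k.factorial : ℝ)⁻¹) • M ^ k) x y)
      = if k = 0 then (1:ℝ) else 0 := by
    intro k
    have h3 : ∀ y, (((k.factorial : ℝ)⁻¹) • M ^ k) x y
        = ((k.factorial : ℝ)⁻¹) * (M ^ k) x y := fun y => rfl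
    simp only [h3, ← Finset.mul_sum]
    cases k with
    | zero => simp [Matrix.one_apply]
    | succ n => simp [rowsum_pow_succ hM n x]
  rw [tsum_congr h2]
  simp

end aux

/-- For any rate matrix `Q`, the family `T_t^s = e^{Q(s−t)}` is a well-behaved transition
matrix system: (i) every `e^{QΔ}` with `Δ ≥ 0` is a transition matrix; (ii) `T_t^t = I` and
`T_t^s = T_t^r * T_r^s` for `0 ≤ t ≤ r ≤ s`; (iii) the right- and left-sided difference
quotients `(1/Δ)‖T_t^{t±Δ} − I‖` are eventually bounded as `Δ → 0⁺`, i.e. their limit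
superior is finite. -/
theorem stmt3 {X : Type*} [Fintype X] [Nonempty X] [DecidableEq X]
    (Q : Matrix X X ℝ) (hQ : IsRateMatrix Q) :
    (∀ Δ : ℝ, 0 ≤ Δ → IsTransitionMatrix (mexp (Δ • Q))) ∧
    (∀ t : ℝ, 0 ≤ t → expSystem Q t t = 1) ∧
    (∀ t r s : ℝ, 0 ≤ t → t ≤ r → r ≤ s →
      expSystem Q t s = expSystem Q t r * expSystem Q r s) ∧
    (∀ t : ℝ, 0 ≤ t →
      Filter.IsBoundedUnder (· ≤ ·) (𝓝[>] (0 : ℝ))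
        (fun Δ : ℝ => Δ⁻¹ * matNorm (expSystem Q t (t + Δ) - 1))) ∧
    (∀ t : ℝ, 0 < t →
      Filter.IsBoundedUnder (· ≤ ·) (𝓝[>] (0 : ℝ))
        (fun Δ : ℝ => Δ⁻¹ * matNorm (expSystem Q (t - Δ) t - 1))) := by
  obtain ⟨hQoff, hQrow⟩ := hQ
  have part1 : ∀ Δ : ℝ, 0 ≤ Δ → IsTransitionMatrix (mexp (Δ • Q)) := by
    intro Δ hΔ
    constructor
    · set c : ℝ := ∑ x, |Q x x| with hc
      have hcx : ∀ x : X, -Q x x ≤ c := fun x =>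
        (neg_le_abs _).trans
          (Finset.single_le_sum (fun i _ => abs_nonneg (Q i i)) (Finset.mem_univ x))
      set B : Matrix X X ℝ := Q + c • (1 : Matrix X X ℝ) with hB
      have hBn : ∀ x y, 0 ≤ B x y := by
        intro x y
        by_cases h : x = y
        · subst h
          have hBx : B x x = Q x x + c := by
            simp [hB, Matrix.add_apply, Matrix.smul_apply, Matrix.one_apply]
          rw [hBx]; linarith [hcx x]
        · have hBx : B x y = Q x y := by
            simp [hB, Matrix.add_apply, Matrix.smul_apply, Matrix.one_apply_ne h]
          rw [hBx]; exact hQoff x y h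
      have hsplit : Δ • Q = (-(Δ * c)) • (1 : Matrix X X ℝ) + Δ • B := by
        rw [hB, smul_add, smul_smul]
        module
      have hcomm : Commute ((-(Δ * c)) • (1 : Matrix X X ℝ)) (Δ • B) :=
        ((Commute.one_left B).smul_right Δ).smul_left (-(Δ * c))
      intro x y
      rw [hsplit, mexp_add_of_commute _ _ hcomm, mexp_smul_one, smul_mul_assoc, one_mul,
        Matrix.smul_apply]
      have hΔB : ∀ x y, 0 ≤ (Δ • B) x y := fun x y =>
        mul_nonneg hΔ (hBn x y)
      exact mul_nonneg (Real.exp_nonneg _) (mexp_entry_nonneg hΔB x y)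
    · intro x
      refine mexp_rowsum_one (fun z => ?_) x
      have : ∀ y, (Δ • Q) z y = Δ * Q z y := fun y => rfl
      simp only [this, ← Finset.mul_sum, hQrow z, mul_zero]
  have part2 : ∀ t : ℝ, 0 ≤ t → expSystem Q t t = 1 := by
    intro t _
    rw [expSystem]
    simp only [sub_self, zero_smul]
    exact mexp_zero
  have part3 : ∀ t r s : ℝ, 0 ≤ t → t ≤ r → r ≤ s →
      expSystem Q t s = expSystem Q t r * expSystem Q r s := by
    intro t r s _ _ _
    rw [expSystem, expSystem, expSystem]
    have h1 : (s - t) • Q = (r - t) • Q + (s - r) • Q := by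
      rw [← add_smul]; ring_nf
    rw [h1]
    exact mexp_add_of_commute _ _ (((Commute.refl Q).smul_right (s - r)).smul_left (r - t))
  have key : Filter.IsBoundedUnder (· ≤ ·) (𝓝[>] (0:ℝ))
      (fun Δ : ℝ => Δ⁻¹ * matNorm (mexp (Δ • Q) - 1)) := by
    letI : SeminormedRing (Matrix X X ℝ) := Matrix.linftyOpSemiNormedRing
    letI : NormedRing (Matrix X X ℝ) := Matrix.linftyOpNormedRing
    letI : NormedAlgebra ℝ (Matrix X X ℝ) := Matrix.linftyOpNormedAlgebra
    haveI : CompleteSpace (Matrix X X ℝ) :=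
      (by infer_instance : CompleteSpace (X → X → ℝ))
    have hmn : ∀ A : Matrix X X ℝ, matNorm A ≤ ‖A‖ := by
      intro A
      refine ciSup_le fun x => ?_
      rw [Matrix.linfty_opNorm_def]
      have h1 : (∑ y, |A x y|) = ((∑ y, ‖A x y‖₊ : NNReal) : ℝ) := by
        push_cast
        simp [Real.norm_eq_abs]
      rw [h1]
      exact_mod_cast Finset.le_sup (f := fun i => ∑ j, ‖A i j‖₊) (Finset.mem_univ x)
    have hd := hasDerivAt_exp_smul_const (𝕂 := ℝ) (𝔸 := Matrix X X ℝ) Q (0:ℝ)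
    have h1 : (fun Δ : ℝ => NormedSpace.exp (Δ • Q) - 1) =O[𝓝 (0:ℝ)] (fun Δ : ℝ => Δ) := by
      have := hd.hasFDerivAt.isBigO_sub
      simp [zero_smul, NormedSpace.exp_zero] at this
      exact this
    obtain ⟨C, hC⟩ := h1.bound
    refine Filter.isBoundedUnder_of_eventually_le (a := C) ?_
    filter_upwards [hC.filter_mono nhdsWithin_le_nhds, self_mem_nhdsWithin] with Δ h hpos
    have hp : (0:ℝ) < Δ := hpos
    have hb : matNorm (mexp (Δ • Q) - 1) ≤ C * Δ := by
      rw [mexp_eq_exp]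
      calc matNorm (NormedSpace.exp (Δ • Q) - 1) ≤ ‖NormedSpace.exp (Δ • Q) - 1‖ := hmn _
        _ ≤ C * ‖Δ‖ := h
        _ = C * Δ := by rw [Real.norm_eq_abs, abs_of_pos hp]
    calc Δ⁻¹ * matNorm (mexp (Δ • Q) - 1) ≤ Δ⁻¹ * (C * Δ) :=
          mul_le_mul_of_nonneg_left hb (inv_nonneg.mpr hp.le)
      _ = C := by rw [mul_comm C Δ, ← mul_assoc, inv_mul_cancel₀ hp.ne', one_mul]
  refine ⟨part1, part2, part3, ?_, ?_⟩
  · intro t _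
    have heq : (fun Δ : ℝ => Δ⁻¹ * matNorm (expSystem Q t (t + Δ) - 1))
        = fun Δ : ℝ => Δ⁻¹ * matNorm (mexp (Δ • Q) - 1) := by
      funext Δ
      rw [expSystem]
      have h2 : t + Δ - t = Δ := by ring
      rw [h2]
    rw [heq]; exact key
  · intro t _
    have heq : (fun Δ : ℝ => Δ⁻¹ * matNorm (expSystem Q (t - Δ) t - 1))
        = fun Δ : ℝ => Δ⁻¹ * matNorm (mexp (Δ • Q) - 1) := by
      funext Δ
      rw [expSystem]
      have h2 : t - (t - Δ) = Δ := by ring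
      rw [h2]
    rw [heq]; exact key
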